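/- Let H be a hypergraph and {A, B} a bipartition of its edge set with border S = δ({A,B}). Let H/A denote the hypergraph obtained from H by replacing all edges of A by a single hyperedge with vertex set S (deleting vertices only incident to edges of A and not in S), and similarly H/B. Then tw(H) <= max(tw(H/A), tw(H/B)). -/

import Mathlib

open Set
open scoped Classical

universe u
variable {V : Type u}

/-- Border of an edge-subset `A` of edge set `E`: vertices incident with an
edge of `A` and with an edge of `E \ A`. -/
def border (E A : Set (Set V)) : Set V :=
  {v | (∃ e ∈ E ∩ A, v ∈ e) ∧ ∃ e ∈ E \ A, v ∈ e}

/-- A tree-decomposition of the hypergraph with vertex set `Vs` and edge set `E`. -/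
structure TreeDecomp (Vs : Set V) (E : Set (Set V)) : Type (u + 1) where
  ι : Type
  T : SimpleGraph ι
  isTree : T.IsTree
  bag : ι → Set V
  cover_vertex : ∀ v ∈ Vs, ∃ i, v ∈ bag i
  cover_edge : ∀ e ∈ E, ∃ i, e ⊆ bag i
  bag_conn : ∀ v : V, {i | v ∈ bag i}.Nonempty → (T.induce {i | v ∈ bag i}).Connected

noncomputable def TreeDecomp.width {Vs : Set V} {E : Set (Set V)}
    (d : TreeDecomp Vs E) : ℕ∞ :=
  ⨆ i, ((d.bag i).encard - 1)

/-- Tree-width of a hypergraph. -/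
noncomputable def tw (Vs : Set V) (E : Set (Set V)) : ℕ∞ :=
  ⨅ d : TreeDecomp Vs E, d.width

/-- Connectivity by a chain of edges. -/
def hconn (E : Set (Set V)) (u w : V) : Prop :=
  Relation.ReflTransGen (fun a b => ∃ e ∈ E, a ∈ e ∧ b ∈ e) u w

/-- An edge set is connected if its sub-hypergraph is connected. -/
def EdgeConnected (X : Set (Set V)) : Prop :=
  ∀ u ∈ ⋃₀ X, ∀ w ∈ ⋃₀ X, hconn X u w

/-- Edges of `H - S`: nonempty traces `e \ S`. -/
def edgesMinus (E : Set (Set V)) (S : Set V) : Set (Set V) :=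
  {x | ∃ e ∈ E, (e \ S).Nonempty ∧ x = e \ S}

/-- `C` is a connected component of the hypergraph with vertex set `W` and edges `E'`. -/
def IsConnCompOf (W : Set V) (E' : Set (Set V)) (C : Set V) : Prop :=
  ∃ u ∈ W, C = {w ∈ W | hconn E' u w}

/-- `e` is a cut-edge of the hypergraph with edge set `E`. -/
def IsCutEdge (E : Set (Set V)) (e : Set V) : Prop :=
  e ∈ E ∧ ∃ u ∈ ⋃₀ (E \ {e}), ∃ w ∈ ⋃₀ (E \ {e}), ¬ hconn (E \ {e}) u w

/-- Edge set of `H/A`: the edges of `A` replaced by one hyperedge on the border. -/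
def contractE (E A : Set (Set V)) : Set (Set V) := (E \ A) ∪ {border E A}

/-- Vertex set of `H/A`. -/
def contractV (Vs : Set V) (E A : Set (Set V)) : Set V := (Vs \ ⋃₀ A) ∪ border E A

/-- An `S`-bridge: a minimal nonempty edge set whose border lies in `S`. -/
def IsSBridge (E : Set (Set V)) (S : Set V) (X : Set (Set V)) : Prop :=
  X.Nonempty ∧ X ⊆ E ∧ border E X ⊆ S ∧
    ∀ Y : Set (Set V), Y.Nonempty → Y ⊆ X → border E Y ⊆ S → Y = X

/-- A p-tree of the hypergraph with edge set `E`: a tree whose internal nodes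
have degree 3 and whose leaves are labelled bijectively with the edges. -/
structure PTree (E : Set (Set V)) : Type (u + 1) where
  ι : Type
  T : SimpleGraph ι
  isTree : T.IsTree
  leafLabel : {i : ι // (T.neighborSet i).ncard = 1} ≃ E
  deg : ∀ i : ι, (T.neighborSet i).ncard = 1 ∨ (T.neighborSet i).ncard = 3

/-- The bag at a node of a p-tree: a leaf gets its edge; an internal node gets
the border of the tripartition of the edges, i.e. all vertices lying on two
edges whose leaves are separated by the node. -/
noncomputable def PTree.bag {E : Set (Set V)} (P : PTree E) (i : P.ι) : Set V :=
  if h : (P.T.neighborSet i).ncard = 1 then (P.leafLabel ⟨i, h⟩ : Set V)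
  else {u | ∃ l1 l2 : {j : P.ι // (P.T.neighborSet j).ncard = 1},
    u ∈ (P.leafLabel l1 : Set V) ∧ u ∈ (P.leafLabel l2 : Set V) ∧
    ∀ p : P.T.Walk l1.1 l2.1, i ∈ p.support}

noncomputable def PTree.width {E : Set (Set V)} (P : PTree E) : ℕ∞ :=
  ⨆ i, ((P.bag i).encard - 1)

/-- The part of the edge tripartition at node `i` lying on the side of `l`. -/
def PTree.sideOf {E : Set (Set V)} (P : PTree E) (i l : P.ι) : Set (Set V) :=
  {e | ∃ h : e ∈ E, ∃ p : P.T.Walk (P.leafLabel.symm ⟨e, h⟩).1 l, i ∉ p.support}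

def PTree.IsPartAt {E : Set (Set V)} (P : PTree E) (i : P.ι) (X : Set (Set V)) : Prop :=
  ∃ l, P.T.Adj i l ∧ X = P.sideOf i l


open Set SimpleGraph

universe u0 v0
variable {α : Type u0} {β : Type v0}

/-- Transfer reachability along a map that sends edges to edges or collapses them. -/
lemma reach_map {G : SimpleGraph α} {H : SimpleGraph β} (f : α → β)
    (hf : ∀ u v, G.Adj u v → H.Adj (f u) (f v) ∨ f u = f v) {u v : α}
    (h : G.Reachable u v) : H.Reachable (f u) (f v) := by
  obtain ⟨p⟩ := h
  induction p with
  | nil => exact Reachable.refl _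
  | @cons a b c hab p ih =>
    rcases hf _ _ hab with h' | h'
    · exact (h'.reachable).trans ih
    · rw [h']; exact ih

lemma connected_map {G : SimpleGraph α} {H : SimpleGraph β} (f : α → β)
    (hf : ∀ u v, G.Adj u v → H.Adj (f u) (f v) ∨ f u = f v)
    (hs : Function.Surjective f) (h : G.Connected) : H.Connected := by
  haveI : Nonempty β := Nonempty.map f h.nonempty
  refine ⟨fun x y => ?_⟩
  obtain ⟨a, rfl⟩ := hs x
  obtain ⟨b, rfl⟩ := hs y
  exact reach_map f hf (h.preconnected a b)

/-- Glue two graphs by one bridge edge between `a0` and `b0`. -/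
def glueG (G1 : SimpleGraph α) (G2 : SimpleGraph β) (a0 : α) (b0 : β) :
    SimpleGraph (α ⊕ β) where
  Adj u v := match u, v with
    | .inl a, .inl b => G1.Adj a b
    | .inr a, .inr b => G2.Adj a b
    | .inl a, .inr b => a = a0 ∧ b = b0
    | .inr b, .inl a => a = a0 ∧ b = b0
  symm := ⟨by rintro (a | a) (b | b) h <;> simp_all [adj_comm]⟩
  loopless := ⟨by
    rintro (a | a) h
    · exact G1.loopless.irrefl a h
    · exact G2.loopless.irrefl a h⟩

lemma glueG_adj_ll {G1 : SimpleGraph α} {G2 : SimpleGraph β} {a0 : α} {b0 : β} {a b : α} :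
    (glueG G1 G2 a0 b0).Adj (.inl a) (.inl b) ↔ G1.Adj a b := Iff.rfl

lemma glueG_adj_rr {G1 : SimpleGraph α} {G2 : SimpleGraph β} {a0 : α} {b0 : β} {a b : β} :
    (glueG G1 G2 a0 b0).Adj (.inr a) (.inr b) ↔ G2.Adj a b := Iff.rfl

lemma glueG_adj_lr {G1 : SimpleGraph α} {G2 : SimpleGraph β} {a0 : α} {b0 : β} {a : α} {b : β} :
    (glueG G1 G2 a0 b0).Adj (.inl a) (.inr b) ↔ a = a0 ∧ b = b0 := Iff.rfl

lemma glueG_adj_rl {G1 : SimpleGraph α} {G2 : SimpleGraph β} {a0 : α} {b0 : β} {a : α} {b : β} :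
    (glueG G1 G2 a0 b0).Adj (.inr b) (.inl a) ↔ a = a0 ∧ b = b0 := Iff.rfl

lemma glueG_isTree {G1 : SimpleGraph α} {G2 : SimpleGraph β} {a0 : α} {b0 : β}
    (h1 : G1.IsTree) (h2 : G2.IsTree) : (glueG G1 G2 a0 b0).IsTree := by
  constructor
  · -- connected
    haveI : Nonempty (α ⊕ β) := ⟨.inl a0⟩
    refine ⟨fun x y => ?_⟩
    have hL : ∀ a : α, (glueG G1 G2 a0 b0).Reachable (.inl a) (.inl a0) := fun a =>
      reach_map (Sum.inl) (fun u v h => Or.inl h) (h1.isConnected.preconnected a a0)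
    have hR : ∀ b : β, (glueG G1 G2 a0 b0).Reachable (.inr b) (.inr b0) := fun b =>
      reach_map (Sum.inr) (fun u v h => Or.inl h) (h2.isConnected.preconnected b b0)
    have hx : (glueG G1 G2 a0 b0).Adj (.inl a0) (.inr b0) := ⟨rfl, rfl⟩
    rcases x with a | b <;> rcases y with a' | b'
    · exact (hL a).trans (hL a').symm
    · exact ((hL a).trans hx.reachable).trans (hR b').symm
    · exact ((hR b).trans hx.reachable.symm).trans (hL a').symm
    · exact (hR b).trans (hR b').symm
  · -- acyclic
    rw [isAcyclic_iff_forall_adj_isBridge]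
    rintro (a | b) (a' | b') hadj <;> rw [isBridge_iff]
    · -- inl a, inl a': edge of G1
      intro hreach
      have hb : G1.IsBridge s(a, a') :=
        (isAcyclic_iff_forall_adj_isBridge.mp h1.IsAcyclic) (glueG_adj_ll.mp hadj)
      refine (isBridge_iff.mp hb) ?_
      refine reach_map (Sum.elim id (fun _ => a0)) ?_ hreach
      rintro (u | u) (v | v) ⟨h, hne⟩
      · refine Or.inl ⟨h, ?_⟩
        simp only [fromEdgeSet_adj, Set.mem_singleton_iff] at hne ⊢
        rintro ⟨he, hne2⟩
        refine hne ⟨?_, by simpa using hne2⟩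
        rw [Sym2.eq_iff] at he ⊢
        rcases he with ⟨rfl, rfl⟩ | ⟨rfl, rfl⟩
        · exact Or.inl ⟨rfl, rfl⟩
        · exact Or.inr ⟨rfl, rfl⟩
      · have h' : u = a0 ∧ v = b0 := h
        exact Or.inr (by simp [h'.1])
      · have h' : v = a0 ∧ u = b0 := h
        exact Or.inr (by simp [h'.1])
      · exact Or.inr rfl
    · -- bridge edge inl a - inr b'
      have hadj' : a = a0 ∧ b' = b0 := hadj
      intro hreach
      have : (⊥ : SimpleGraph Bool).Reachable false true := by
        refine reach_map (Sum.elim (fun _ => false) (fun _ => true)) ?_ hreach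
        rintro (u | u) (v | v) ⟨h, hne⟩
        · exact Or.inr rfl
        · exfalso
          have h' : u = a0 ∧ v = b0 := h
          refine hne ?_
          simp only [fromEdgeSet_adj, Set.mem_singleton_iff]
          refine ⟨?_, by simp⟩
          rw [Sym2.eq_iff]
          exact Or.inl ⟨congrArg Sum.inl (h'.1.trans hadj'.1.symm),
            congrArg Sum.inr (h'.2.trans hadj'.2.symm)⟩
        · exfalso
          have h' : v = a0 ∧ u = b0 := h
          refine hne ?_
          simp only [fromEdgeSet_adj, Set.mem_singleton_iff]
          refine ⟨?_, by simp⟩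
          rw [Sym2.eq_iff]
          exact Or.inr ⟨congrArg Sum.inr (h'.2.trans hadj'.2.symm),
            congrArg Sum.inl (h'.1.trans hadj'.1.symm)⟩
        · exact Or.inr rfl
      simp at this
    · -- bridge edge inr b - inl a'
      have hadj' : a' = a0 ∧ b = b0 := hadj
      intro hreach
      have : (⊥ : SimpleGraph Bool).Reachable true false := by
        refine reach_map (Sum.elim (fun _ => false) (fun _ => true)) ?_ hreach
        rintro (u | u) (v | v) ⟨h, hne⟩
        · exact Or.inr rfl
        · exfalso
          have h' : u = a0 ∧ v = b0 := h
          refine hne ?_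
          simp only [fromEdgeSet_adj, Set.mem_singleton_iff]
          refine ⟨?_, by simp⟩
          rw [Sym2.eq_iff]
          exact Or.inr ⟨congrArg Sum.inl (h'.1.trans hadj'.1.symm),
            congrArg Sum.inr (h'.2.trans hadj'.2.symm)⟩
        · exfalso
          have h' : v = a0 ∧ u = b0 := h
          refine hne ?_
          simp only [fromEdgeSet_adj, Set.mem_singleton_iff]
          refine ⟨?_, by simp⟩
          rw [Sym2.eq_iff]
          exact Or.inl ⟨congrArg Sum.inr (h'.2.trans hadj'.2.symm),
            congrArg Sum.inl (h'.1.trans hadj'.1.symm)⟩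
        · exact Or.inr rfl
      simp at this
    · -- inr b, inr b': edge of G2
      intro hreach
      have hb : G2.IsBridge s(b, b') :=
        (isAcyclic_iff_forall_adj_isBridge.mp h2.IsAcyclic) (glueG_adj_rr.mp hadj)
      refine (isBridge_iff.mp hb) ?_
      refine reach_map (Sum.elim (fun _ => b0) id) ?_ hreach
      rintro (u | u) (v | v) ⟨h, hne⟩
      · exact Or.inr rfl
      · have h' : u = a0 ∧ v = b0 := h
        exact Or.inr (by simp [h'.2])
      · have h' : v = a0 ∧ u = b0 := h
        exact Or.inr (by simp [h'.2])
      · refine Or.inl ⟨h, ?_⟩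
        simp only [fromEdgeSet_adj, Set.mem_singleton_iff] at hne ⊢
        rintro ⟨he, hne2⟩
        refine hne ⟨?_, by simpa using hne2⟩
        rw [Sym2.eq_iff] at he ⊢
        rcases he with ⟨rfl, rfl⟩ | ⟨rfl, rfl⟩
        · exact Or.inl ⟨rfl, rfl⟩
        · exact Or.inr ⟨rfl, rfl⟩

section Aux

open SimpleGraph

variable {α : Type} {β : Type} {V : Type u}

lemma border_compl {E A : Set (Set V)} (hA : A ⊆ E) :
    border E (E \ A) = border E A := by
  ext v
  simp only [border, Set.mem_setOf_eq, Set.mem_inter_iff, Set.mem_diff]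
  constructor
  · rintro ⟨⟨e1, ⟨he1, _, hne1⟩, hv1⟩, ⟨e2, ⟨he2, hne2⟩, hv2⟩⟩
    have he2A : e2 ∈ A := by by_contra hc; exact hne2 ⟨he2, hc⟩
    exact ⟨⟨e2, ⟨he2, he2A⟩, hv2⟩, ⟨e1, ⟨he1, hne1⟩, hv1⟩⟩
  · rintro ⟨⟨e1, ⟨he1, he1A⟩, hv1⟩, ⟨e2, ⟨he2, hne2⟩, hv2⟩⟩
    exact ⟨⟨e2, ⟨he2, he2, hne2⟩, hv2⟩, ⟨e1, ⟨he1, fun h => h.2 he1A⟩, hv1⟩⟩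

lemma tw_le_of_two_decomps (Vs : Set V) (E A : Set (Set V)) (hE : ∀ e ∈ E, e ⊆ Vs)
    (hA : A ⊆ E)
    (d1 : TreeDecomp (contractV Vs E A) (contractE E A))
    (d2 : TreeDecomp (contractV Vs E (E \ A)) (contractE E (E \ A))) :
    tw Vs E ≤ max d1.width d2.width := by
  classical
  set S := border E A with hSdef
  obtain ⟨i1, hi1⟩ := d1.cover_edge S (Set.mem_union_right _ (Set.mem_singleton _))
  obtain ⟨i2, hi2'⟩ := d2.cover_edge (border E (E \ A))
      (Set.mem_union_right _ (Set.mem_singleton _))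
  have hi2 : S ⊆ d2.bag i2 := by rw [hSdef, ← border_compl hA]; exact hi2'
  set W1 : Set V := (Vs \ ⋃₀ A) ∪ S with hW1def
  set W2 : Set V := ⋃₀ A ∪ S with hW2def
  have hSW1 : S ⊆ W1 := Set.subset_union_right
  have hSW2 : S ⊆ W2 := Set.subset_union_right
  have hW1W2 : ∀ v, v ∈ W1 → v ∈ W2 → v ∈ S := by
    rintro v (⟨_, hvA⟩ | hvS) hv2
    · rcases hv2 with hvA' | hvS
      · exact absurd hvA' hvA
      · exact hvS
    · exact hvS
  refine le_trans (iInf_le _ ?_) ?_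
  · -- the glued tree decomposition
    refine
      { ι := d1.ι ⊕ d2.ι
        T := glueG d1.T d2.T i1 i2
        isTree := glueG_isTree d1.isTree d2.isTree
        bag := Sum.elim (fun i => d1.bag i ∩ W1) (fun i => d2.bag i ∩ W2)
        cover_vertex := ?_
        cover_edge := ?_
        bag_conn := ?_ }
    · -- cover_vertex
      intro v hv
      by_cases hvA : v ∈ ⋃₀ A
      · have hvc : v ∈ contractV Vs E (E \ A) := by
          by_cases hvB : v ∈ ⋃₀ (E \ A)
          · refine Or.inr ?_
            obtain ⟨e, he, hve⟩ := hvB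
            obtain ⟨f, hf, hvf⟩ := hvA
            exact ⟨⟨e, ⟨he.1, he⟩, hve⟩, ⟨f, ⟨hA hf, fun h => h.2 hf⟩, hvf⟩⟩
          · exact Or.inl ⟨hv, hvB⟩
        obtain ⟨i, hi⟩ := d2.cover_vertex v hvc
        exact ⟨Sum.inr i, hi, Or.inl hvA⟩
      · obtain ⟨i, hi⟩ := d1.cover_vertex v (Or.inl ⟨hv, hvA⟩)
        exact ⟨Sum.inl i, hi, Or.inl ⟨hv, hvA⟩⟩
    · -- cover_edge
      intro e he
      by_cases heA : e ∈ A
      · obtain ⟨i, hi⟩ := d2.cover_edge e (Or.inl ⟨he, fun h => h.2 heA⟩)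
        exact ⟨Sum.inr i, fun v hv => ⟨hi hv, Or.inl ⟨e, heA, hv⟩⟩⟩
      · obtain ⟨i, hi⟩ := d1.cover_edge e (Or.inl ⟨he, heA⟩)
        refine ⟨Sum.inl i, fun v hv => ⟨hi hv, ?_⟩⟩
        by_cases hvA : v ∈ ⋃₀ A
        · obtain ⟨f, hf, hvf⟩ := hvA
          exact Or.inr ⟨⟨f, ⟨hA hf, hf⟩, hvf⟩, ⟨e, ⟨he, heA⟩, hv⟩⟩
        · exact Or.inl ⟨hE e he hv, hvA⟩
    · -- bag_conn
      intro v hne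
      set M : Set (d1.ι ⊕ d2.ι) :=
        {i | v ∈ Sum.elim (fun i => d1.bag i ∩ W1) (fun i => d2.bag i ∩ W2) i} with hMdef
      set Ml : Set d1.ι := {i | v ∈ d1.bag i} with hMldef
      set Mr : Set d2.ι := {i | v ∈ d2.bag i} with hMrdef
      have hMl : ∀ a : d1.ι, Sum.inl a ∈ M ↔ v ∈ d1.bag a ∩ W1 := fun a => Iff.rfl
      have hMr : ∀ b : d2.ι, Sum.inr b ∈ M ↔ v ∈ d2.bag b ∩ W2 := fun b => Iff.rfl
      by_cases hL : ∃ a, v ∈ d1.bag a ∧ v ∈ W1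
      · by_cases hR : ∃ b, v ∈ d2.bag b ∧ v ∈ W2
        · -- both sides: v ∈ S
          obtain ⟨a₀, _, hvW1⟩ := hL
          obtain ⟨b₀, _, hvW2⟩ := hR
          have hvS : v ∈ S := hW1W2 v hvW1 hvW2
          have hmem1 : Sum.inl i1 ∈ M := ⟨hi1 hvS, hvW1⟩
          have hmem2 : Sum.inr i2 ∈ M := ⟨hi2 hvS, hvW2⟩
          haveI : Nonempty M := ⟨⟨Sum.inl i1, hmem1⟩⟩
          refine ⟨fun x y => ?_⟩
          have key : ∀ x : M, ((glueG d1.T d2.T i1 i2).induce M).Reachable x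
              ⟨Sum.inl i1, hmem1⟩ := by
            rintro ⟨(a | b), hx⟩
            · have hconn1 := d1.bag_conn v ⟨a, ((hMl a).mp hx).1⟩
              have := reach_map (G := d1.T.induce Ml)
                (H := (glueG d1.T d2.T i1 i2).induce M)
                (fun j => ⟨Sum.inl j.1, ⟨j.2, hvW1⟩⟩)
                (fun u w h => Or.inl h)
                (hconn1.preconnected ⟨a, ((hMl a).mp hx).1⟩ ⟨i1, hi1 hvS⟩)
              exact this
            · have hconn2 := d2.bag_conn v ⟨b, ((hMr b).mp hx).1⟩
              have hreach := reach_map (G := d2.T.induce Mr)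
                (H := (glueG d1.T d2.T i1 i2).induce M)
                (fun j => ⟨Sum.inr j.1, ⟨j.2, hvW2⟩⟩)
                (fun u w h => Or.inl h)
                (hconn2.preconnected ⟨b, ((hMr b).mp hx).1⟩ ⟨i2, hi2 hvS⟩)
              refine hreach.trans (Adj.reachable ?_)
              exact ⟨rfl, rfl⟩
          exact (key x).trans (key y).symm
        · -- only left side
          obtain ⟨a₀, ha₀, hvW1⟩ := hL
          refine connected_map (G := d1.T.induce Ml)
            (fun j => ⟨Sum.inl j.1, ⟨j.2, hvW1⟩⟩) (fun u w h => Or.inl h) ?_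
            (d1.bag_conn v ⟨a₀, ha₀⟩)
          rintro ⟨(a | b), hx⟩
          · exact ⟨⟨a, ((hMl a).mp hx).1⟩, Subtype.ext rfl⟩
          · exact absurd ⟨b, ((hMr b).mp hx).1, ((hMr b).mp hx).2⟩ hR
      · by_cases hR : ∃ b, v ∈ d2.bag b ∧ v ∈ W2
        · -- only right side
          obtain ⟨b₀, hb₀, hvW2⟩ := hR
          refine connected_map (G := d2.T.induce Mr)
            (fun j => ⟨Sum.inr j.1, ⟨j.2, hvW2⟩⟩) (fun u w h => Or.inl h) ?_
            (d2.bag_conn v ⟨b₀, hb₀⟩)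
          rintro ⟨(a | b), hx⟩
          · exact absurd ⟨a, ((hMl a).mp hx).1, ((hMl a).mp hx).2⟩ hL
          · exact ⟨⟨b, ((hMr b).mp hx).1⟩, Subtype.ext rfl⟩
        · -- empty: contradiction
          exfalso
          obtain ⟨x, hx⟩ := hne
          rcases x with a | b
          · exact hL ⟨a, ((hMl a).mp hx).1, ((hMl a).mp hx).2⟩
          · exact hR ⟨b, ((hMr b).mp hx).1, ((hMr b).mp hx).2⟩
  · -- width bound
    show (⨆ i : d1.ι ⊕ d2.ι,
      ((Sum.elim (fun i => d1.bag i ∩ W1) (fun i => d2.bag i ∩ W2) i).encard - 1))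
      ≤ max d1.width d2.width
    rw [iSup_sum]
    refine sup_le_sup ?_ ?_
    · exact iSup_mono fun a =>
        tsub_le_tsub_right (Set.encard_mono Set.inter_subset_left) 1
    · exact iSup_mono fun b =>
        tsub_le_tsub_right (Set.encard_mono Set.inter_subset_left) 1

end Aux

/-- For a bipartition `{A, E \ A}` of the edge set of `H`,
`tw(H) ≤ max (tw(H/A), tw(H/B))`. -/
theorem tw_le_max_contractions
    (Vs : Set V) (E A : Set (Set V)) (hE : ∀ e ∈ E, e ⊆ Vs)
    (hA : A ⊆ E) (hAne : A.Nonempty) (hBne : (E \ A).Nonempty) :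
    tw Vs E ≤ max (tw (contractV Vs E A) (contractE E A))
                  (tw (contractV Vs E (E \ A)) (contractE E (E \ A))) := by
  by_contra hcon
  push_neg at hcon
  have h1 : tw (contractV Vs E A) (contractE E A) < tw Vs E :=
    lt_of_le_of_lt (le_max_left _ _) hcon
  have h2 : tw (contractV Vs E (E \ A)) (contractE E (E \ A)) < tw Vs E :=
    lt_of_le_of_lt (le_max_right _ _) hcon
  rw [tw, iInf_lt_iff] at h1 h2
  obtain ⟨d1, hd1⟩ := h1
  obtain ⟨d2, hd2⟩ := h2
  have hkey := tw_le_of_two_decomps Vs E A hE hA d1 d2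
  exact absurd (lt_of_le_of_lt hkey (max_lt hd1 hd2)) (lt_irrefl _)
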